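/- Let (dₙ) be a strictly increasing sequence of positive integers with associated multi-digit expansion bₙ, let ε > 0, 1/2 < α < 1, and N ∈ ℕ with N > max{(1+ε)^{1/α}, ε^{1/(α−1)}}. For fixed B₁,…,B_{N²} with B_k ∈ {0,…,10^{d_k}−1}, define A := {x ∈ (0,1) : b_k(x) = B_k for k ≤ N², and for all n ≥ N, 1 − ε/n^α ≤ C(x,n)/(2n+1) < 1}, where C(x,n) := #{k : n² < k ≤ (n+1)², b_k(x) = 10^{d_k} − 1}. Then A is a closed subset of ℝ. -/

import Mathlib

/-- The `k`-th decimal digit of `x` (convention: the expansion ending in zeros). -/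
noncomputable def digit (x : ℝ) (k : ℕ) : ℕ := (⌊x * 10 ^ k⌋ % 10).toNat

/-- `Dsum d n = d 1 + ⋯ + d n`, with `Dsum d 0 = 0`. -/
def Dsum (d : ℕ → ℕ) (n : ℕ) : ℕ := ∑ k ∈ Finset.Icc 1 n, d k

/-- The `n`-th multi-digit of `x` with respect to the sequence `d`. -/
noncomputable def mdigit (d : ℕ → ℕ) (n : ℕ) (x : ℝ) : ℕ :=
  ∑ k ∈ Finset.Icc (Dsum d (n - 1) + 1) (Dsum d n), 10 ^ (Dsum d n - k) * digit x k

/-- The number of maximal multi-digits of `x` in the block `(n², (n+1)²]`. -/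
noncomputable def Ccount (d : ℕ → ℕ) (x : ℝ) (n : ℕ) : ℕ :=
  ((Finset.Ioc (n ^ 2) ((n + 1) ^ 2)).filter
    (fun k => mdigit d k x = 10 ^ (d k) - 1)).card

lemma le_Dsum (d : ℕ → ℕ) (hdpos : ∀ n, 1 ≤ n → 0 < d n) (m : ℕ) : m ≤ Dsum d m := by
  have : ∑ k ∈ Finset.Icc 1 m, 1 ≤ ∑ k ∈ Finset.Icc 1 m, d k :=
    Finset.sum_le_sum fun k hk => hdpos k (Finset.mem_Icc.mp hk).1
  simpa [Dsum] using this

lemma Dsum_mono (d : ℕ → ℕ) {a b : ℕ} (h : a ≤ b) : Dsum d a ≤ Dsum d b :=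
  Finset.sum_le_sum_of_subset (Finset.Icc_subset_Icc_right h)

lemma Dsum_succ (d : ℕ → ℕ) (k : ℕ) (hk : 1 ≤ k) : Dsum d k = Dsum d (k-1) + d k := by
  obtain ⟨j, rfl⟩ := Nat.exists_eq_add_of_le hk
  simp only [Dsum, Nat.add_sub_cancel_left]
  rw [add_comm 1 j]
  rw [Finset.sum_Icc_succ_top (by omega)]

lemma nine_sum (a m : ℕ) : ∑ j ∈ Finset.Icc (a+1) (a+m), 10 ^ (a + m - j) * 9 = 10 ^ m - 1 := by
  induction m with
  | zero => simp
  | succ m ih =>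
    rw [show a + (m+1) = (a+m)+1 by ring, Finset.sum_Icc_succ_top (by omega)]
    have h1 : ∑ j ∈ Finset.Icc (a+1) (a+m), 10 ^ (a + m + 1 - j) * 9
        = 10 * ∑ j ∈ Finset.Icc (a+1) (a+m), 10 ^ (a + m - j) * 9 := by
      rw [Finset.mul_sum]
      refine Finset.sum_congr rfl fun j hj => ?_
      have hj' := Finset.mem_Icc.mp hj
      rw [show a + m + 1 - j = (a + m - j) + 1 by omega, pow_succ]
      ring
    rw [h1, ih]
    have : 1 ≤ 10 ^ m := Nat.one_le_pow _ _ (by norm_num)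
    simp only [Nat.sub_self, pow_zero, one_mul, pow_succ]
    omega

lemma floor_eventually (x : ℝ) (k : ℕ) (h : Int.fract (x * 10 ^ k) ≠ 0) :
    ∀ᶠ y in nhds x, ⌊y * 10 ^ k⌋ = ⌊x * 10 ^ k⌋ := by
  have h1 : ((⌊x * 10 ^ k⌋ : ℤ) : ℝ) < x * 10 ^ k := by
    rcases lt_or_eq_of_le (Int.floor_le (x * 10 ^ k)) with h' | h'
    · exact h'
    · exact absurd (by rw [← h', Int.fract_intCast]) h
  have h2 := Int.lt_floor_add_one (x * 10 ^ k)
  have hc : ContinuousAt (fun y : ℝ => y * 10 ^ k) x := by fun_prop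
  have := hc.eventually_mem (Ioo_mem_nhds h1 h2)
  filter_upwards [this] with y hy
  exact Int.floor_eq_iff.mpr ⟨le_of_lt hy.1, hy.2⟩

lemma pow_mul_self (t j : ℕ) (htj : t ≤ j) : (10:ℝ)^t * 10^(j-t) = 10^j := by
  rw [← pow_add]; congr 1; omega

lemma floor_near_right (x y : ℝ) (t j K : ℕ) (c : ℤ) (hxc : x * 10^t = (c:ℝ))
    (htj : t ≤ j) (hjK : j ≤ K) (hy : x ≤ y) (hy2 : y < x + ((10:ℝ)^K)⁻¹) :
    ⌊y * 10^j⌋ = c * 10^(j-t) := by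
  have hxj : x * 10^j = ((c * 10^(j-t) : ℤ) : ℝ) := by
    push_cast
    rw [← pow_mul_self t j htj, ← mul_assoc, hxc]
  have h1 : ((c * 10^(j-t) : ℤ) : ℝ) ≤ y * 10^j := by
    rw [← hxj]; gcongr
  have h2 : y * 10^j < ((c * 10^(j-t) : ℤ) : ℝ) + 1 := by
    rw [← hxj]
    have hp : (10:ℝ)^j * ((10:ℝ)^K)⁻¹ ≤ 1 := by
      rw [← div_eq_mul_inv, div_le_one (by positivity)]
      exact pow_le_pow_right₀ (by norm_num) hjK
    have : y * 10^j < (x + ((10:ℝ)^K)⁻¹) * 10^j := mul_lt_mul_of_pos_right hy2 (by positivity)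
    nlinarith [pow_pos (show (0:ℝ) < 10 by norm_num) j]
  exact Int.floor_eq_iff.mpr ⟨h1, h2⟩

lemma digit_near_right (x y : ℝ) (t j K : ℕ) (c : ℤ) (hxc : x * 10^t = (c:ℝ))
    (htj : t < j) (hjK : j ≤ K) (hy : x ≤ y) (hy2 : y < x + ((10:ℝ)^K)⁻¹) :
    digit y j = 0 := by
  unfold digit
  rw [floor_near_right x y t j K c hxc htj.le hjK hy hy2]
  have : (10:ℤ) ∣ c * 10^(j-t) := Dvd.dvd.mul_left (dvd_pow_self 10 (by omega)) c
  omega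

lemma floor_near_left (x y : ℝ) (t j K : ℕ) (c : ℤ) (hxc : x * 10^t = (c:ℝ))
    (htj : t ≤ j) (hjK : j ≤ K) (hy : x - ((10:ℝ)^K)⁻¹ < y) (hy2 : y < x) :
    ⌊y * 10^j⌋ = c * 10^(j-t) - 1 := by
  have hxj : x * 10^j = ((c * 10^(j-t) : ℤ) : ℝ) := by
    push_cast
    rw [← pow_mul_self t j htj, ← mul_assoc, hxc]
  have hp : (10:ℝ)^j * ((10:ℝ)^K)⁻¹ ≤ 1 := by
    rw [← div_eq_mul_inv, div_le_one (by positivity)]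
    exact pow_le_pow_right₀ (by norm_num) hjK
  have h1 : ((c * 10^(j-t) - 1 : ℤ) : ℝ) ≤ y * 10^j := by
    push_cast
    have : (x - ((10:ℝ)^K)⁻¹) * 10^j ≤ y * 10^j := mul_le_mul_of_nonneg_right hy.le (by positivity)
    have hx := hxj
    push_cast at hx
    nlinarith [pow_pos (show (0:ℝ) < 10 by norm_num) j]
  have h2 : y * 10^j < ((c * 10^(j-t) - 1 : ℤ) : ℝ) + 1 := by
    push_cast
    have hx := hxj
    push_cast at hx
    have : y * 10^j < x * 10^j := mul_lt_mul_of_pos_right hy2 (by positivity)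
    linarith
  exact Int.floor_eq_iff.mpr ⟨h1, h2⟩

lemma digit_near_left (x y : ℝ) (t j K : ℕ) (c : ℤ) (hxc : x * 10^t = (c:ℝ))
    (htj : t < j) (hjK : j ≤ K) (hy : x - ((10:ℝ)^K)⁻¹ < y) (hy2 : y < x) :
    digit y j = 9 := by
  unfold digit
  rw [floor_near_left x y t j K c hxc htj.le hjK hy hy2]
  have hd : c * 10^(j-t) % 10 = 0 := by
    rw [show j - t = (j-t-1)+1 by omega, pow_succ, ← mul_assoc, Int.mul_emod_left]
  omega

lemma mdigit_congr (d : ℕ → ℕ) (k : ℕ) (x y : ℝ)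
    (h : ∀ j, j ≤ Dsum d k → digit y j = digit x j) : mdigit d k y = mdigit d k x :=
  Finset.sum_congr rfl fun j hj => by
    rw [h j (Finset.mem_Icc.mp hj).2]

lemma mdigit_eq_zero (d : ℕ → ℕ) (k : ℕ) (y : ℝ)
    (h : ∀ j ∈ Finset.Icc (Dsum d (k-1)+1) (Dsum d k), digit y j = 0) :
    mdigit d k y = 0 := by
  unfold mdigit
  refine Finset.sum_eq_zero fun j hj => ?_
  rw [h j hj, mul_zero]

lemma mdigit_eq_max (d : ℕ → ℕ) (k : ℕ) (hk : 1 ≤ k) (y : ℝ)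
    (h : ∀ j ∈ Finset.Icc (Dsum d (k-1)+1) (Dsum d k), digit y j = 9) :
    mdigit d k y = 10 ^ (d k) - 1 := by
  unfold mdigit
  have hD := Dsum_succ d k hk
  calc ∑ j ∈ Finset.Icc (Dsum d (k-1)+1) (Dsum d k), 10 ^ (Dsum d k - j) * digit y j
      = ∑ j ∈ Finset.Icc (Dsum d (k-1)+1) (Dsum d (k-1) + d k), 10 ^ (Dsum d (k-1) + d k - j) * 9 := by
        rw [← hD]; exact Finset.sum_congr rfl fun j hj => by rw [h j hj]
    _ = 10 ^ (d k) - 1 := nine_sum _ _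

theorem stmt10 (d : ℕ → ℕ) (hdpos : ∀ n, 1 ≤ n → 0 < d n)
    (hdmono : ∀ n, 1 ≤ n → d n < d (n + 1))
    (ε α : ℝ) (N : ℕ) (B : ℕ → ℕ)
    (hε : 0 < ε) (hα1 : 1 / 2 < α) (hα2 : α < 1)
    (hN : (N : ℝ) > max ((1 + ε) ^ (1 / α)) (ε ^ (1 / (α - 1))))
    (hB : ∀ k, 1 ≤ k → k ≤ N ^ 2 → B k ≤ 10 ^ (d k) - 1) :
    IsClosed {x : ℝ | x ∈ Set.Ioo (0 : ℝ) 1 ∧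
      (∀ k, 1 ≤ k → k ≤ N ^ 2 → mdigit d k x = B k) ∧
      ∀ n : ℕ, N ≤ n →
        1 - ε / (n : ℝ) ^ α ≤ (Ccount d x n : ℝ) / (2 * n + 1) ∧
        (Ccount d x n : ℝ) / (2 * n + 1) < 1} := by
  have hα0 : (0:ℝ) < α := by linarith
  -- key: ε < n^α for n ≥ N
  have heps : ∀ n : ℕ, N ≤ n → ε / (n : ℝ) ^ α < 1 ∧ (0:ℝ) < (n:ℝ) ^ α := by
    intro n hn
    have h1 : ((1 + ε) ^ (1/α) : ℝ) < N := lt_of_le_of_lt (le_max_left _ _) hN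
    have h0 : (0:ℝ) ≤ (1 + ε) ^ (1/α) := Real.rpow_nonneg (by linarith) _
    have h2 : (((1 + ε) ^ (1/α) : ℝ)) ^ α < (N:ℝ) ^ α :=
      Real.rpow_lt_rpow h0 h1 hα0
    have h3 : (((1 + ε) ^ (1/α) : ℝ)) ^ α = 1 + ε := by
      rw [← Real.rpow_mul (by linarith), one_div, inv_mul_cancel₀ (ne_of_gt hα0),
        Real.rpow_one]
    have h4 : (N:ℝ) ^ α ≤ (n:ℝ) ^ α :=
      Real.rpow_le_rpow (Nat.cast_nonneg _) (Nat.cast_le.mpr hn) hα0.le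
    have h5 : 1 + ε < (n:ℝ) ^ α := by linarith
    have h6 : (0:ℝ) < (n:ℝ) ^ α := by linarith
    exact ⟨(div_lt_one h6).mpr (by linarith), h6⟩
  rw [← isSeqClosed_iff_isClosed]
  intro xs x hxs hlim
  -- Step 1: x is not a 10-adic rational
  have hfract : ∀ t : ℕ, Int.fract (x * 10 ^ t) ≠ 0 := by
    intro t h0
    set c : ℤ := ⌊x * 10 ^ t⌋ with hc
    have hxc : x * 10 ^ t = (c : ℝ) := by
      have : Int.fract (x * 10 ^ t) = x * 10 ^ t - c := rfl
      rw [this] at h0; linarith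
    set n := max N t with hn
    have hn1 : N ≤ n := le_max_left _ _
    have hn2 : t ≤ n := le_max_right _ _
    set K := Dsum d ((n+1)^2) with hK
    obtain ⟨m, hm⟩ := (hlim.eventually
      (Metric.ball_mem_nhds x (show (0:ℝ) < ((10:ℝ)^K)⁻¹ by positivity))).exists
    set y := xs m with hy
    have hyd : |y - x| < ((10:ℝ)^K)⁻¹ := by
      simpa [Real.dist_eq] using hm
    obtain ⟨hy01, hyB, hyC⟩ := hxs m
    have hCn := hyC n hn1
    -- digit positions in the block (n², (n+1)²] lie in (t, K]
    have hblock : ∀ k ∈ Finset.Ioc (n^2) ((n+1)^2),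
        ∀ j ∈ Finset.Icc (Dsum d (k-1)+1) (Dsum d k), t < j ∧ j ≤ K := by
      intro k hk j hj
      rw [Finset.mem_Ioc] at hk
      rw [Finset.mem_Icc] at hj
      have h1 : n^2 ≤ k - 1 := by omega
      have h2 : Dsum d (n^2) ≤ Dsum d (k-1) := Dsum_mono d h1
      have h3 : n^2 ≤ Dsum d (n^2) := le_Dsum d hdpos _
      have h4 : Dsum d k ≤ K := Dsum_mono d hk.2
      have h5 : t ≤ n^2 := le_trans hn2 (Nat.le_self_pow (by norm_num) n)
      exact ⟨by omega, by omega⟩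
    have h2n : (0:ℝ) < 2 * (n:ℝ) + 1 := by positivity
    rcases le_or_gt x y with hxy | hxy
    · -- y ≥ x : digits are all 0 in the block, Ccount = 0
      have hy2 : y < x + ((10:ℝ)^K)⁻¹ := by
        have := abs_lt.mp hyd; linarith [this.2]
      have hCc : Ccount d y n = 0 := by
        unfold Ccount
        rw [Finset.card_eq_zero, Finset.filter_eq_empty_iff]
        intro k hk hmd
        have hk1 : 1 ≤ k := by
          have := (Finset.mem_Ioc.mp hk).1; omega
        have h0' : mdigit d k y = 0 := mdigit_eq_zero d k y fun j hj =>
          digit_near_right x y t j K c hxc (hblock k hk j hj).1 (hblock k hk j hj).2 hxy hy2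
        have hd1 : 1 ≤ d k := hdpos k hk1
        have : (10:ℕ) ≤ 10 ^ (d k) := by
          calc (10:ℕ) = 10 ^ 1 := (pow_one 10).symm
          _ ≤ 10 ^ (d k) := Nat.pow_le_pow_right (by norm_num) hd1
        omega
      have := hCn.1
      rw [hCc] at this
      simp only [Nat.cast_zero, zero_div] at this
      have := (heps n hn1).1
      have hpos := (heps n hn1).2
      have : ε / (n:ℝ) ^ α < 1 := this
      linarith [hCn.1, hpos]
    · -- y < x : digits are all 9 in the block, Ccount = 2n+1
      have hy1 : x - ((10:ℝ)^K)⁻¹ < y := by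
        have := abs_lt.mp hyd; linarith [this.1]
      have hCc : Ccount d y n = 2 * n + 1 := by
        unfold Ccount
        have : (Finset.Ioc (n ^ 2) ((n + 1) ^ 2)).filter
            (fun k => mdigit d k y = 10 ^ (d k) - 1) = Finset.Ioc (n ^ 2) ((n + 1) ^ 2) := by
          refine Finset.filter_true_of_mem fun k hk => ?_
          have hk1 : 1 ≤ k := by
            have := (Finset.mem_Ioc.mp hk).1; omega
          exact mdigit_eq_max d k hk1 y fun j hj =>
            digit_near_left x y t j K c hxc (hblock k hk j hj).1 (hblock k hk j hj).2 hy1 hxy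
        rw [this, Nat.card_Ioc]
        ring_nf
        omega
      have h1 := hCn.2
      rw [hCc] at h1
      have : ((2 * n + 1 : ℕ) : ℝ) = 2 * (n:ℝ) + 1 := by push_cast; ring
      rw [this, div_self (ne_of_gt h2n)] at h1
      exact lt_irrefl _ h1
  -- Step 2: digits converge
  have hdigs : ∀ J : ℕ, ∀ᶠ m in Filter.atTop, ∀ j ≤ J, digit (xs m) j = digit x j := by
    intro J
    have h1 : ∀ᶠ y in nhds x, ∀ j ∈ Finset.Iic J, digit y j = digit x j := by
      rw [Filter.eventually_all_finset]
      intro j _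
      filter_upwards [floor_eventually x j (hfract j)] with y hy
      unfold digit; rw [hy]
    filter_upwards [hlim.eventually h1] with m hm j hj
    exact hm j (Finset.mem_Iic.mpr hj)
  -- Step 3: x ∈ (0,1)
  have hx01 : x ∈ Set.Ioo (0:ℝ) 1 := by
    have hIcc : x ∈ Set.Icc (0:ℝ) 1 := by
      refine isClosed_Icc.mem_of_tendsto hlim (Filter.Eventually.of_forall fun m => ?_)
      exact ⟨(hxs m).1.1.le, (hxs m).1.2.le⟩
    have h0 := hfract 0
    simp only [pow_zero, mul_one] at h0
    constructor
    · rcases lt_or_eq_of_le hIcc.1 with h | h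
      · exact h
      · exact absurd (by rw [← h]; norm_num) h0
    · rcases lt_or_eq_of_le hIcc.2 with h | h
      · exact h
      · exact absurd (by rw [h]; norm_num) h0
  refine ⟨hx01, ?_, ?_⟩
  · -- Step 4: initial multi-digits
    intro k hk1 hk2
    obtain ⟨m, hm⟩ := (hdigs (Dsum d k)).exists
    have := mdigit_congr d k x (xs m) fun j hj => hm j hj
    rw [← this]
    exact (hxs m).2.1 k hk1 hk2
  · -- Step 5: counts
    intro n hn
    obtain ⟨m, hm⟩ := (hdigs (Dsum d ((n+1)^2))).exists
    have hCc : Ccount d x n = Ccount d (xs m) n := by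
      unfold Ccount
      congr 1
      refine Finset.filter_congr fun k hk => ?_
      have h4 : Dsum d k ≤ Dsum d ((n+1)^2) := Dsum_mono d (Finset.mem_Ioc.mp hk).2
      rw [mdigit_congr d k x (xs m) fun j hj => hm j (le_trans hj h4)]
    rw [hCc]
    exact (hxs m).2.2 n hn
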